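/- Let v be a valuation on a superring R. Then (A_v, 𝔭_v) is a valuation pair of R: A_v = {x ∈ R : v(x) ≥ 0} is a subsuperring of R, 𝔭_v = {x ∈ R : v(x) > 0} is a prime ideal of A_v containing 𝔍_R, and for every x ∈ R with x ∉ A_v there exists x' ∈ 𝔭_v ∩ R₀ such that x·x' ∈ A_v ∖ 𝔭_v (equivalently v(x·x') = 0). -/

import Mathlib

universe u

/-- A superring: a `ZMod 2`-graded ring `R = R₀ ⊕ R₁` which is supercommutative
(`R₀` is central and every odd element squares to zero). -/
structure IsSuperring {R : Type*} [Ring R] (𝒜 : ZMod 2 → AddSubgroup R) : Prop where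
  one_mem : (1 : R) ∈ 𝒜 0
  mul_mem : ∀ {i j : ZMod 2} {x y : R}, x ∈ 𝒜 i → y ∈ 𝒜 j → x * y ∈ 𝒜 (i + j)
  decompose : ∀ x : R, ∃ x0 ∈ 𝒜 0, ∃ x1 ∈ 𝒜 1, x = x0 + x1
  unique_decomp : ∀ x0 ∈ 𝒜 0, ∀ x1 ∈ 𝒜 1, x0 + x1 = 0 → x0 = 0 ∧ x1 = 0
  even_central : ∀ x ∈ 𝒜 0, ∀ y : R, x * y = y * x
  odd_sq : ∀ x ∈ 𝒜 1, x * x = 0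

/-- The canonical superideal `𝔍_R = R·R₁` of a superring. -/
def canonicalSuperideal {R : Type*} [Ring R] (𝒜 : ZMod 2 → AddSubgroup R) : Set R :=
  (AddSubgroup.closure {y : R | ∃ r : R, ∃ s ∈ 𝒜 1, y = r * s} : AddSubgroup R)

/-- A (Manis) valuation on a ring `R`: a surjective map `v : R → Γ ∪ {∞}`
(`∞ = ⊤` is absorbing and greater than every element of the totally ordered
abelian group `Γ`) with `v 0 = ∞`, `v 1 = 0`, `v (x*y) = v x + v y` and
`v (x+y) ≥ min (v x) (v y)`. -/
structure IsValuation {R : Type*} [Ring R] {Γ : Type*} [AddCommGroup Γ] [LinearOrder Γ] [IsOrderedAddMonoid Γ]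
    (v : R → WithTop Γ) : Prop where
  surjective : Function.Surjective v
  map_zero : v 0 = ⊤
  map_one : v 1 = 0
  map_mul : ∀ x y : R, v (x * y) = v x + v y
  min_le_add : ∀ x y : R, min (v x) (v y) ≤ v (x + y)

/-- `A_v = {x : v x ≥ 0}`. -/
def valRing {R : Type*} [Ring R] {Γ : Type*} [AddCommGroup Γ] [LinearOrder Γ] [IsOrderedAddMonoid Γ]
    (v : R → WithTop Γ) : Set R := {x : R | 0 ≤ v x}

/-- `𝔭_v = {x : v x > 0}`. -/
def valIdeal {R : Type*} [Ring R] {Γ : Type*} [AddCommGroup Γ] [LinearOrder Γ] [IsOrderedAddMonoid Γ]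
    (v : R → WithTop Γ) : Set R := {x : R | 0 < v x}

/-- `supp v = v⁻¹(∞)`. -/
def valSupp {R : Type*} [Ring R] {Γ : Type*} [AddCommGroup Γ] [LinearOrder Γ] [IsOrderedAddMonoid Γ]
    (v : R → WithTop Γ) : Set R := {x : R | v x = ⊤}

/-- A set is `ℤ₂`-graded (a "superset"): every element decomposes into an even and
an odd homogeneous component, both belonging to the set. -/
def IsGradedSet {R : Type*} [Ring R] (𝒜 : ZMod 2 → AddSubgroup R) (I : Set R) : Prop :=
  ∀ x ∈ I, ∃ x0 ∈ 𝒜 0, ∃ x1 ∈ 𝒜 1, x0 ∈ I ∧ x1 ∈ I ∧ x = x0 + x1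

/-- A subring of `R` (same identity), as a set. -/
structure IsSubringSet {R : Type*} [Ring R] (A : Set R) : Prop where
  zero_mem : (0 : R) ∈ A
  one_mem : (1 : R) ∈ A
  add_mem : ∀ {x y : R}, x ∈ A → y ∈ A → x + y ∈ A
  neg_mem : ∀ {x : R}, x ∈ A → -x ∈ A
  mul_mem : ∀ {x y : R}, x ∈ A → y ∈ A → x * y ∈ A

/-- A prime ideal `p` of a subring `A` of `R`: an ideal of `A` such that `A/p` is
an integral domain. -/
structure IsPrimeIdealOf {R : Type*} [Ring R] (A p : Set R) : Prop where
  subset : p ⊆ A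
  zero_mem : (0 : R) ∈ p
  add_mem : ∀ {x y : R}, x ∈ p → y ∈ p → x + y ∈ p
  neg_mem : ∀ {x : R}, x ∈ p → -x ∈ p
  mul_mem_left : ∀ {a x : R}, a ∈ A → x ∈ p → a * x ∈ p
  mul_mem_right : ∀ {x a : R}, x ∈ p → a ∈ A → x * a ∈ p
  one_not_mem : (1 : R) ∉ p
  comm_mem : ∀ {x y : R}, x ∈ A → y ∈ A → x * y - y * x ∈ p
  mem_or_mem : ∀ {x y : R}, x ∈ A → y ∈ A → x * y ∈ p → x ∈ p ∨ y ∈ p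

/-- A valuation pair `(A, p)` of a superring `R`: `A` is a subsuperring, `p` is a
prime ideal of `A` containing the canonical superideal `𝔍_R`, and for every
`x ∈ R ∖ A` there is `x' ∈ p ∩ R₀` with `x·x' ∈ A ∖ p`. -/
structure IsValuationPair {R : Type*} [Ring R] (𝒜 : ZMod 2 → AddSubgroup R)
    (A p : Set R) : Prop where
  subring : IsSubringSet A
  graded : IsGradedSet 𝒜 A
  prime : IsPrimeIdealOf A p
  canonical_subset : canonicalSuperideal 𝒜 ⊆ p
  pair : ∀ x : R, x ∉ A → ∃ x' : R, x' ∈ p ∧ x' ∈ 𝒜 0 ∧ x * x' ∈ A ∧ x * x' ∉ p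

section Aux

variable {R : Type*} [Ring R] {Γ : Type*} [AddCommGroup Γ] [LinearOrder Γ] [IsOrderedAddMonoid Γ]
  {v : R → WithTop Γ}

private lemma val_neg (hv : IsValuation v) (x : R) : v (-x) = v x := by
  have hm1 : v (-1 : R) = 0 := by
    have h : v (-1 : R) + v (-1 : R) = 0 := by
      rw [← hv.map_mul]; simp [hv.map_one]
    cases hx : v (-1 : R) with
    | top => rw [hx] at h; simp at h
    | coe g =>
      rw [hx] at h
      have hg : g + g = 0 := by exact_mod_cast h
      have : g = 0 := by
        rcases lt_trichotomy g 0 with h' | h' | h'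
        · exact absurd hg (ne_of_lt (add_neg h' h'))
        · exact h'
        · exact absurd hg (ne_of_gt (add_pos h' h'))
      exact_mod_cast this
  calc v (-x) = v ((-1) * x) := by rw [neg_one_mul]
    _ = v (-1 : R) + v x := hv.map_mul _ _
    _ = v x := by rw [hm1, zero_add]

private lemma val_odd_top {𝒜 : ZMod 2 → AddSubgroup R} (hR : IsSuperring 𝒜)
    (hv : IsValuation v) {x : R} (hx : x ∈ 𝒜 1) : v x = ⊤ := by
  have h : v x + v x = ⊤ := by rw [← hv.map_mul, hR.odd_sq x hx, hv.map_zero]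
  cases hx' : v x with
  | top => rfl
  | coe g =>
    rw [hx'] at h
    rw [← WithTop.coe_add] at h
    exact absurd h WithTop.coe_ne_top

end Aux

/-- For any valuation `v` on a superring `R`, the pair `(A_v, 𝔭_v)` is a valuation
pair of `R`: `A_v` is a subsuperring, `𝔭_v` is a prime ideal of `A_v` containing
`𝔍_R`, and for every `x ∉ A_v` there is `x' ∈ 𝔭_v ∩ R₀` with `x·x' ∈ A_v ∖ 𝔭_v`. -/
theorem valuation_valuationPair {R : Type u} [Ring R] [Nontrivial R]
    (𝒜 : ZMod 2 → AddSubgroup R) (hR : IsSuperring 𝒜)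
    {Γ : Type*} [AddCommGroup Γ] [LinearOrder Γ] [IsOrderedAddMonoid Γ]
    (v : R → WithTop Γ) (hv : IsValuation v) :
    IsValuationPair 𝒜 (valRing v) (valIdeal v) := by
  have memA : ∀ {x : R}, x ∈ valRing v ↔ 0 ≤ v x := Iff.rfl
  have memP : ∀ {x : R}, x ∈ valIdeal v ↔ 0 < v x := Iff.rfl
  constructor
  · -- subring
    constructor
    · show (0 : WithTop Γ) ≤ v 0; rw [hv.map_zero]; exact le_top
    · show (0 : WithTop Γ) ≤ v 1; rw [hv.map_one]
    · intro x y hx hy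
      exact le_trans (le_min hx hy) (hv.min_le_add x y)
    · intro x hx
      show (0 : WithTop Γ) ≤ v (-x); rw [val_neg hv]; exact hx
    · intro x y hx hy
      show (0 : WithTop Γ) ≤ v (x * y)
      rw [hv.map_mul]; exact add_nonneg hx hy
  · -- graded
    intro x hx
    obtain ⟨x0, hx0, x1, hx1, hxe⟩ := hR.decompose x
    have h1 : v x1 = ⊤ := val_odd_top hR hv hx1
    have h0 : (0 : WithTop Γ) ≤ v x0 := by
      have e : x0 = x + -x1 := by rw [hxe]; abel
      rw [e]
      refine le_trans (le_min hx ?_) (hv.min_le_add x (-x1))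
      rw [val_neg hv, h1]; exact le_top
    exact ⟨x0, hx0, x1, hx1, h0, by show (0:WithTop Γ) ≤ v x1; rw [h1]; exact le_top, hxe⟩
  · -- prime ideal
    constructor
    · intro x hx
      show (0 : WithTop Γ) ≤ v x
      exact le_of_lt (show (0 : WithTop Γ) < v x from hx)
    · show (0 : WithTop Γ) < v 0; rw [hv.map_zero]
      exact lt_of_lt_of_le (WithTop.coe_lt_top (0 : Γ)) le_rfl
    · intro x y hx hy
      exact lt_of_lt_of_le (lt_min hx hy) (hv.min_le_add x y)
    · intro x hx
      show (0 : WithTop Γ) < v (-x); rw [val_neg hv]; exact hx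
    · intro a x ha hx
      show (0 : WithTop Γ) < v (a * x)
      rw [hv.map_mul]
      calc (0 : WithTop Γ) < v x := hx
        _ = 0 + v x := (zero_add _).symm
        _ ≤ v a + v x := add_le_add_left ha _
    · intro x a hx ha
      show (0 : WithTop Γ) < v (x * a)
      rw [hv.map_mul]
      calc (0 : WithTop Γ) < v x := hx
        _ = v x + 0 := (add_zero _).symm
        _ ≤ v x + v a := add_le_add_right ha _
    · show ¬ (0 : WithTop Γ) < v 1
      rw [hv.map_one]; exact lt_irrefl 0
    · intro x y _ _
      obtain ⟨x0, hx0, x1, hx1, hxe⟩ := hR.decompose x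
      obtain ⟨y0, hy0, y1, hy1, hye⟩ := hR.decompose y
      have e : x * y - y * x = x1 * y1 - y1 * x1 := by
        have expand : ∀ a b c d : R, (a + b) * (c + d) = a*c + a*d + b*c + b*d := by
          intros; noncomm_ring
        rw [hxe, hye, expand, expand]
        rw [(hR.even_central x0 hx0 y0).symm, hR.even_central y0 hy0 x1,
          (hR.even_central x0 hx0 y1).symm]
        abel
      show (0 : WithTop Γ) < v (x * y - y * x)
      rw [e, sub_eq_add_neg]
      have t1 : v (x1 * y1) = ⊤ := by
        rw [hv.map_mul, val_odd_top hR hv hx1]; simp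
      have t2 : v (-(y1 * x1)) = ⊤ := by
        rw [val_neg hv, hv.map_mul, val_odd_top hR hv hy1]; simp
      have := hv.min_le_add (x1 * y1) (-(y1 * x1))
      rw [t1, t2, min_self] at this
      rw [top_le_iff.mp this]
      exact WithTop.coe_lt_top (0 : Γ)
    · intro x y hx hy hxy
      by_contra hc
      push_neg at hc
      obtain ⟨h1, h2⟩ := hc
      have e1 : v x = 0 := le_antisymm (not_lt.mp h1) hx
      have e2 : v y = 0 := le_antisymm (not_lt.mp h2) hy
      have hxy' : (0 : WithTop Γ) < v (x * y) := hxy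
      rw [hv.map_mul, e1, e2, add_zero] at hxy'
      exact lt_irrefl _ hxy'
  · -- canonical subset
    intro x hx
    have hsupp : x ∈ valSupp v := by
      let T : AddSubgroup R :=
        { carrier := valSupp v
          zero_mem' := hv.map_zero
          add_mem' := by
            intro a b ha hb
            have := hv.min_le_add a b
            rw [show v a = ⊤ from ha, show v b = ⊤ from hb, min_self] at this
            exact top_le_iff.mp this
          neg_mem' := by
            intro a ha
            show v (-a) = ⊤
            rw [val_neg hv]; exact ha }
      have hle : AddSubgroup.closure {y : R | ∃ r : R, ∃ s ∈ 𝒜 1, y = r * s} ≤ T := by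
        rw [AddSubgroup.closure_le]
        rintro y ⟨r, s, hs, rfl⟩
        show v (r * s) = ⊤
        rw [hv.map_mul, val_odd_top hR hv hs]; simp
      exact hle hx
    show (0 : WithTop Γ) < v x
    rw [show v x = ⊤ from hsupp]
    exact WithTop.coe_lt_top (0 : Γ)
  · -- pair
    intro x hx
    rw [memA, not_le] at hx
    cases hvx : v x with
    | top => rw [hvx] at hx; exact absurd hx (by simp)
    | coe g =>
      rw [hvx] at hx
      have hg : g < 0 := by exact_mod_cast hx
      obtain ⟨y, hy⟩ := hv.surjective ((-g : Γ) : WithTop Γ)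
      obtain ⟨y0, hy0, y1, hy1, hye⟩ := hR.decompose y
      have h1 : v y1 = ⊤ := val_odd_top hR hv hy1
      have hvy0 : v y0 = ((-g : Γ) : WithTop Γ) := by
        refine le_antisymm ?_ ?_
        · rw [← hy, hye]
          have := hv.min_le_add y0 y1
          rwa [h1, min_eq_left le_top] at this
        · have := hv.min_le_add y (-y1)
          rw [val_neg hv, h1, min_eq_left le_top, hy] at this
          have e : y + -y1 = y0 := by rw [hye]; abel
          rw [e] at this
          exact this
      refine ⟨y0, ?_, hy0, ?_, ?_⟩
      · show (0 : WithTop Γ) < v y0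
        rw [hvy0]
        exact_mod_cast neg_pos.mpr hg
      · show (0 : WithTop Γ) ≤ v (x * y0)
        rw [hv.map_mul, hvx, hvy0, ← WithTop.coe_add, add_neg_cancel,
          WithTop.coe_zero]
      · show ¬ (0 : WithTop Γ) < v (x * y0)
        rw [hv.map_mul, hvx, hvy0, ← WithTop.coe_add, add_neg_cancel,
          WithTop.coe_zero]
        exact lt_irrefl 0
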